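/- Fix γ, ω > 0 and r_x, R ∈ ℝ with 0 < |R| ≤ 1. Then the closed curve θ ↦ (1/ω)(ṙ_x, Ṙ)(θ) = (-(γ/(2ω)) r_x - R cos θ, r_x cos θ - (γ/(2ω)) R (1 + sin²θ) + (γ/ω) sin θ), θ ∈ [0, 2π], is the boundary of a convex compact subset of ℝ². -/

import Mathlib

open Real Set

lemma alg1 (R k α β t s : ℝ) (hR : R ≠ 0) (hs : s ≠ 0) :
    2*α*t + β - k*t/(R^2*s) = α*(2*t^1*1) + β*1 + k*((0 - 2*(t/R)*(1/R))/(2*s)) := by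
  field_simp
  ring

lemma alg2 (R k α t s : ℝ) (hR : R ≠ 0) (hs : s ≠ 0) (hss : s^2 = 1 - (t/R)^2) :
    2*α - k/(R^2*(1 - (t/R)^2)*s)
      = 2*α*1 - (k*1*(R^2*s) - k*t*(R^2*((0 - 2*(t/R)*(1/R))/(2*s))))/(R^2*s)^2 := by
  rw [← hss]
  have hR2 : R^2 ≠ 0 := pow_ne_zero 2 hR
  have hkey : R^2*s^2 = R^2 - t^2 := by
    have := hss
    field_simp at this
    linarith
  field_simp
  linear_combination (2*k) * hkey

lemma concave_aux (A R α β δ k : ℝ) (hR : R ≠ 0) (hk : 0 < k) (hα : 2*α*R^2 ≤ k) :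
    ConcaveOn ℝ (Icc (A - |R|) (A + |R|))
      (fun x => α*(x-A)^2 + β*(x-A) + δ + k*Real.sqrt (1 - ((x-A)/R)^2)) := by
  have hR2 : 0 < R^2 := by positivity
  have hw : ∀ x ∈ interior (Icc (A - |R|) (A + |R|)), 0 < 1 - ((x-A)/R)^2 := by
    intro x hx
    rw [interior_Icc, mem_Ioo] at hx
    have h1 : (x-A)^2 < |R|^2 := sq_lt_sq' (by linarith) (by linarith)
    rw [sq_abs] at h1
    have h2 : ((x-A)/R)^2 = (x-A)^2/R^2 := by ring
    rw [h2, sub_pos, div_lt_one hR2]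
    exact h1
  refine concaveOn_of_hasDerivWithinAt2_nonpos (convex_Icc _ _) ?_
    (f' := fun x => 2*α*(x-A) + β - k*(x-A)/(R^2*Real.sqrt (1 - ((x-A)/R)^2)))
    (f'' := fun x => 2*α - k/(R^2*(1 - ((x-A)/R)^2)*Real.sqrt (1 - ((x-A)/R)^2)))
    ?_ ?_ ?_
  · fun_prop
  · intro x hx
    have hwx := hw x hx
    have hs : 0 < Real.sqrt (1 - ((x-A)/R)^2) := Real.sqrt_pos.2 hwx
    have hu : HasDerivAt (fun y : ℝ => (y-A)/R) (1/R) x := ((hasDerivAt_id x).sub_const A).div_const R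
    have hp : HasDerivAt (fun y : ℝ => ((y-A)/R)^2) (2*((x-A)/R)*(1/R)) x := by
      exact (hu.pow 2).congr_deriv (by norm_num)
    have hw' := (hasDerivAt_const x 1).sub hp
    have hsq := hw'.sqrt (ne_of_gt hwx)
    have h1 : HasDerivAt (fun y : ℝ => α*(y-A)^2) (α*(2*(x-A)^1*1)) x :=
      (((hasDerivAt_id x).sub_const A).pow 2).const_mul α
    have h2 : HasDerivAt (fun y : ℝ => β*(y-A)) (β*1) x :=
      ((hasDerivAt_id x).sub_const A).const_mul β
    have htot := ((h1.add h2).add_const δ).add (hsq.const_mul k)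
    have goal' : HasDerivAt (fun y => α*(y-A)^2 + β*(y-A) + δ + k*Real.sqrt (1 - ((y-A)/R)^2))
        (2*α*(x-A) + β - k*(x-A)/(R^2*Real.sqrt (1 - ((x-A)/R)^2))) x := by
      rw [alg1 R k α β (x-A) _ hR (ne_of_gt hs)]
      exact htot
    exact goal'.hasDerivWithinAt
  · intro x hx
    have hwx := hw x hx
    have hs : 0 < Real.sqrt (1 - ((x-A)/R)^2) := Real.sqrt_pos.2 hwx
    have hss : Real.sqrt (1 - ((x-A)/R)^2) ^ 2 = 1 - ((x-A)/R)^2 := Real.sq_sqrt hwx.le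
    have hu : HasDerivAt (fun y : ℝ => (y-A)/R) (1/R) x := ((hasDerivAt_id x).sub_const A).div_const R
    have hp : HasDerivAt (fun y : ℝ => ((y-A)/R)^2) (2*((x-A)/R)*(1/R)) x := by
      exact (hu.pow 2).congr_deriv (by norm_num)
    have hw' := (hasDerivAt_const x 1).sub hp
    have hden := (hw'.sqrt (ne_of_gt hwx)).const_mul (R^2)
    have hnum : HasDerivAt (fun y : ℝ => k*(y-A)) (k*1) x :=
      ((hasDerivAt_id x).sub_const A).const_mul k
    have hdne : R^2*Real.sqrt (1 - ((x-A)/R)^2) ≠ 0 := by positivity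
    have h2 : HasDerivAt (fun y : ℝ => 2*α*(y-A) + β) (2*α*1) x :=
      (((hasDerivAt_id x).sub_const A).const_mul (2*α)).add_const β
    have htot := h2.sub (hnum.div hden hdne)
    have goal' : HasDerivAt (fun y => 2*α*(y-A) + β - k*(y-A)/(R^2*Real.sqrt (1 - ((y-A)/R)^2)))
        (2*α - k/(R^2*(1 - ((x-A)/R)^2)*Real.sqrt (1 - ((x-A)/R)^2))) x := by
      rw [alg2 R k α (x-A) _ hR (ne_of_gt hs) hss]
      exact htot
    exact goal'.hasDerivWithinAt
  · intro x hx
    have hwx := hw x hx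
    have hs : 0 < Real.sqrt (1 - ((x-A)/R)^2) := Real.sqrt_pos.2 hwx
    have hw1 : 1 - ((x-A)/R)^2 ≤ 1 := by nlinarith [sq_nonneg ((x-A)/R)]
    have hs1 : Real.sqrt (1 - ((x-A)/R)^2) ≤ 1 :=
      le_trans (Real.sqrt_le_sqrt hw1) (by simp)
    have hX : 0 < R^2*(1 - ((x-A)/R)^2)*Real.sqrt (1 - ((x-A)/R)^2) := by positivity
    have hws : (1 - ((x-A)/R)^2) * Real.sqrt (1 - ((x-A)/R)^2) ≤ 1 := by
      nlinarith [mul_nonneg (by linarith : (0:ℝ) ≤ 1 - (1 - ((x-A)/R)^2)) hs.le]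
    have hX1 : R^2*(1 - ((x-A)/R)^2)*Real.sqrt (1 - ((x-A)/R)^2) ≤ R^2 := by
      nlinarith [mul_le_mul_of_nonneg_left hws hR2.le]
    rw [sub_nonpos, le_div_iff₀ hX]
    rcases le_or_gt α 0 with hneg | hpos
    · nlinarith
    · nlinarith [mul_le_mul_of_nonneg_left hX1 (le_of_lt hpos)]

lemma exists_angle (u v : ℝ) (h : u^2 + v^2 = 1) :
    ∃ θ ∈ Icc (0:ℝ) (2*π), Real.cos θ = u ∧ Real.sin θ = v := by
  have hu1 : -1 ≤ u := by nlinarith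
  have hu2 : u ≤ 1 := by nlinarith
  have hv2 : Real.sqrt (1 - u^2) = |v| := by
    rw [show 1 - u^2 = v^2 by linarith, Real.sqrt_sq_eq_abs]
  have hpi := Real.pi_pos
  have ha1 := Real.arccos_nonneg u
  have ha2 := Real.arccos_le_pi u
  rcases le_or_gt 0 v with hv | hv
  · refine ⟨Real.arccos u, ⟨ha1, by linarith⟩, Real.cos_arccos hu1 hu2, ?_⟩
    rw [Real.sin_arccos, hv2, abs_of_nonneg hv]
  · refine ⟨2*π - Real.arccos u, ⟨by linarith, by linarith⟩, ?_, ?_⟩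
    · rw [Real.cos_sub, Real.cos_two_pi, Real.sin_two_pi, Real.cos_arccos hu1 hu2]
      ring
    · rw [Real.sin_sub, Real.cos_two_pi, Real.sin_two_pi, Real.sin_arccos, hv2,
        abs_of_neg hv]
      ring

lemma abs_le_of_div_sq (t r : ℝ) (hr : r ≠ 0) (h : (t/r)^2 ≤ 1) : |t| ≤ |r| := by
  have hr2 : (0:ℝ) < r^2 := by positivity
  have h2 : t^2 ≤ r^2 := by rw [div_pow, div_le_one hr2] at h; exact h
  rw [← Real.sqrt_sq_eq_abs, ← Real.sqrt_sq_eq_abs]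
  exact Real.sqrt_le_sqrt h2

lemma div_sq_le_one (t r : ℝ) (hr : r ≠ 0) (h : |t| ≤ |r|) : (t/r)^2 ≤ 1 := by
  have hr2 : (0:ℝ) < r^2 := by positivity
  rw [div_pow, div_le_one hr2]
  nlinarith [abs_nonneg t, sq_abs t, sq_abs r]

set_option maxHeartbeats 1000000 in
/-- For `0 < |R| ≤ 1`, the closed curve of admissible (normalized) velocities
of the auxiliary qubit system is the boundary of a convex compact set. -/
theorem velocity_set_convex_compact (γ ω rx R : ℝ) (hγ : 0 < γ) (hω : 0 < ω)
    (hR0 : 0 < |R|) (hR1 : |R| ≤ 1) :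
    ∃ U : Set (ℝ × ℝ), IsCompact U ∧ Convex ℝ U ∧
      frontier U =
        (fun θ : ℝ => (-(γ/(2*ω)) * rx - R * Real.cos θ,
          rx * Real.cos θ - (γ/(2*ω)) * R * (1 + Real.sin θ ^ 2)
            + (γ/ω) * Real.sin θ)) '' Set.Icc 0 (2 * π) := by
  have hR : R ≠ 0 := by
    intro h; rw [h] at hR0; simp at hR0
  set c : ℝ := γ/(2*ω) with hc_def
  have hc : 0 < c := by positivity
  have hγω : γ/ω = 2*c := by rw [hc_def]; field_simp
  rw [hγω]
  set A : ℝ := -c * rx with hA_def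
  set f : ℝ → ℝ := fun x => (c/R)*(x-A)^2 - (rx/R)*(x-A) - 2*c*R with hf_def
  set g : ℝ × ℝ → ℝ := fun p => ((p.1 - A)/R)^2 + ((p.2 - f p.1)/(2*c))^2 with hg_def
  have hgcont : Continuous g := by
    rw [hg_def]
    apply Continuous.add <;> apply Continuous.pow <;> apply Continuous.div_const
    · fun_prop
    · simp only [hf_def]; fun_prop
  set U : Set (ℝ×ℝ) := {p | g p ≤ 1} with hU_def
  clear_value c A f g U
  have h2c : (0:ℝ) < 2*c := by positivity
  have hclosed : IsClosed U := by
    rw [hU_def]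
    exact isClosed_le hgcont continuous_const
  have hcurve : ∀ θ : ℝ,
      (A - R*Real.cos θ, rx*Real.cos θ - c*R*(1+Real.sin θ^2) + 2*c*Real.sin θ)
      = (A - R*Real.cos θ, f (A - R*Real.cos θ) + 2*c*Real.sin θ) := by
    intro θ
    have hfv : f (A - R*Real.cos θ) = rx*Real.cos θ + c*R*(Real.cos θ)^2 - 2*c*R := by
      rw [hf_def]
      field_simp
      ring
    rw [hfv, Real.sin_sq]
    norm_num
    ring
  -- compactness
  have hcpt : IsCompact U := by
    have hK : IsCompact ((fun q : ℝ×ℝ => (q.1, f q.1 + q.2)) ''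
        (Icc (A-|R|) (A+|R|) ×ˢ Icc (-(2*c)) (2*c))) := by
      apply IsCompact.image (isCompact_Icc.prod isCompact_Icc)
      rw [hf_def]
      fun_prop
    apply hK.of_isClosed_subset hclosed
    intro p hp
    rw [hU_def] at hp
    simp only [mem_setOf_eq, hg_def] at hp
    have h1 : ((p.1 - A)/R)^2 ≤ 1 := by nlinarith [sq_nonneg ((p.2 - f p.1)/(2*c))]
    have h2 : ((p.2 - f p.1)/(2*c))^2 ≤ 1 := by nlinarith [sq_nonneg ((p.1 - A)/R)]
    have h1' := abs_le_of_div_sq _ _ hR h1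
    have h2' := abs_le_of_div_sq _ _ (ne_of_gt h2c) h2
    rw [abs_of_pos h2c] at h2'
    refine ⟨(p.1, p.2 - f p.1), ?_, ?_⟩
    · constructor
      · rw [mem_Icc]
        have h7 := abs_le.1 h1'
        constructor <;> linarith [h7.1, h7.2]
      · rw [mem_Icc]
        have h7 := abs_le.1 h2'
        constructor
        · show -(2*c) ≤ p.2 - f p.1
          linarith [h7.1]
        · show p.2 - f p.1 ≤ 2*c
          linarith [h7.2]
    · simp
  -- convexity
  have hMcc : ConcaveOn ℝ (Icc (A-|R|) (A+|R|))
      (fun x => f x + 2*c*Real.sqrt (1 - ((x-A)/R)^2)) := by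
    have haux := concave_aux A R (c/R) (-(rx/R)) (-(2*c*R)) (2*c) hR (by positivity)
      (by
        have he : 2*(c/R)*R^2 = 2*c*R := by field_simp
        rw [he]
        nlinarith [le_abs_self R])
    convert haux using 2 with x
    rw [hf_def]
    ring
  have hLcc : ConcaveOn ℝ (Icc (A-|R|) (A+|R|))
      (fun x => -f x + 2*c*Real.sqrt (1 - ((x-A)/R)^2)) := by
    have haux := concave_aux A R (-(c/R)) (rx/R) (2*c*R) (2*c) hR (by positivity)
      (by
        have he : 2*(-(c/R))*R^2 = -(2*c*R) := by field_simp
        rw [he]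
        nlinarith [neg_abs_le R])
    convert haux using 2 with x
    rw [hf_def]
    ring
  have hiff : ∀ p : ℝ×ℝ, p ∈ U ↔ p.1 ∈ Icc (A-|R|) (A+|R|) ∧
      f p.1 - 2*c*Real.sqrt (1 - ((p.1-A)/R)^2) ≤ p.2 ∧
      p.2 ≤ f p.1 + 2*c*Real.sqrt (1 - ((p.1-A)/R)^2) := by
    intro p
    rw [hU_def]
    simp only [mem_setOf_eq, hg_def]
    constructor
    · intro hp
      have h1 : ((p.1 - A)/R)^2 ≤ 1 := by nlinarith [sq_nonneg ((p.2 - f p.1)/(2*c))]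
      have h2 : ((p.2 - f p.1)/(2*c))^2 ≤ 1 - ((p.1-A)/R)^2 := by nlinarith
      have h1' := abs_le.1 (abs_le_of_div_sq _ _ hR h1)
      have h3 : |(p.2 - f p.1)/(2*c)| ≤ Real.sqrt (1 - ((p.1-A)/R)^2) := by
        rw [← Real.sqrt_sq_eq_abs]
        exact Real.sqrt_le_sqrt h2
      rw [abs_div, abs_of_pos h2c, div_le_iff₀ h2c] at h3
      have h4 := abs_le.1 h3
      refine ⟨by rw [mem_Icc]; constructor <;> linarith [h1'.1, h1'.2],
        by nlinarith [h4.1], by nlinarith [h4.2]⟩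
    · rintro ⟨hx, hL1, hM1⟩
      rw [mem_Icc] at hx
      have h1 : ((p.1 - A)/R)^2 ≤ 1 := div_sq_le_one _ _ hR (abs_le.2 ⟨by linarith, by linarith⟩)
      have hwnn : (0:ℝ) ≤ 1 - ((p.1-A)/R)^2 := by linarith
      have hsq : Real.sqrt (1 - ((p.1-A)/R)^2) ^ 2 = 1 - ((p.1-A)/R)^2 := Real.sq_sqrt hwnn
      have h4 : |p.2 - f p.1| ≤ 2*c*Real.sqrt (1 - ((p.1-A)/R)^2) :=
        abs_le.2 ⟨by linarith, by linarith⟩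
      have h5 : (p.2 - f p.1)^2 ≤ (2*c*Real.sqrt (1 - ((p.1-A)/R)^2))^2 := by
        nlinarith [abs_nonneg (p.2 - f p.1), sq_abs (p.2 - f p.1)]
      have h6 : ((p.2 - f p.1)/(2*c))^2 ≤ 1 - ((p.1-A)/R)^2 := by
        rw [div_pow]
        rw [div_le_iff₀ (by positivity : (0:ℝ) < (2*c)^2)]
        nlinarith [hsq]
      linarith
  have hconv : Convex ℝ U := by
    intro p hp q hq a b ha hb hab
    rw [hiff] at hp hq ⊢
    have e1 : (a • p + b • q).1 = a * p.1 + b * q.1 := rfl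
    have e2 : (a • p + b • q).2 = a * p.2 + b * q.2 := rfl
    rw [e1, e2]
    refine ⟨(convex_Icc _ _) hp.1 hq.1 ha hb hab, ?_, ?_⟩
    · have hcc : a * (-f p.1 + 2*c*Real.sqrt (1 - ((p.1-A)/R)^2))
          + b * (-f q.1 + 2*c*Real.sqrt (1 - ((q.1-A)/R)^2))
          ≤ -f (a*p.1+b*q.1) + 2*c*Real.sqrt (1 - ((a*p.1+b*q.1-A)/R)^2) := by
        have h := hLcc.2 hp.1 hq.1 ha hb hab
        simp only [smul_eq_mul] at h
        exact h
      linarith [mul_le_mul_of_nonneg_left hp.2.1 ha, mul_le_mul_of_nonneg_left hq.2.1 hb]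
    · have hcc : a * (f p.1 + 2*c*Real.sqrt (1 - ((p.1-A)/R)^2))
          + b * (f q.1 + 2*c*Real.sqrt (1 - ((q.1-A)/R)^2))
          ≤ f (a*p.1+b*q.1) + 2*c*Real.sqrt (1 - ((a*p.1+b*q.1-A)/R)^2) := by
        have h := hMcc.2 hp.1 hq.1 ha hb hab
        simp only [smul_eq_mul] at h
        exact h
      linarith [mul_le_mul_of_nonneg_left hp.2.2 ha, mul_le_mul_of_nonneg_left hq.2.2 hb]
  -- frontier
  have hfr1 : frontier U ⊆ {p : ℝ×ℝ | g p = 1} := by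
    intro p hp
    have hp1 : p ∈ U := hclosed.frontier_subset hp
    rw [hU_def, mem_setOf_eq] at hp1
    by_contra hne
    have hlt : g p < 1 := lt_of_le_of_ne hp1 hne
    have hint : p ∈ interior U := by
      rw [mem_interior]
      refine ⟨{q | g q < 1}, ?_, isOpen_lt hgcont continuous_const, hlt⟩
      rw [hU_def]
      intro q hq
      simp only [mem_setOf_eq] at hq ⊢
      exact le_of_lt hq
    exact hp.2 hint
  have hfr2 : {p : ℝ×ℝ | g p = 1} ⊆ frontier U := by
    intro p hp
    have hp' : ((p.1 - A)/R)^2 + ((p.2 - f p.1)/(2*c))^2 = 1 := by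
      rw [mem_setOf_eq, hg_def] at hp
      exact hp
    rw [frontier_eq_closure_inter_closure]
    constructor
    · apply subset_closure
      rw [hU_def, mem_setOf_eq, hg_def]
      exact le_of_eq hp'
    · rw [Metric.mem_closure_iff]
      intro ε hε
      rcases eq_or_ne (p.2 - f p.1) 0 with hv | hv
      · -- perturb x
        have ht : (0:ℝ) < ε/2 := by positivity
        have hu2 : ((p.1 - A)/R)^2 = 1 := by
          rw [hv] at hp'; simpa using hp'
        refine ⟨(p.1 + (ε/2)*(p.1 - A), p.2), ?_, ?_⟩
        · rw [hU_def]
          simp only [mem_compl_iff, mem_setOf_eq, not_le, hg_def]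
          have e1 : (p.1 + (ε/2)*(p.1-A) - A)/R = (1+(ε/2))*((p.1-A)/R) := by
            field_simp
            ring
          rw [e1, mul_pow, hu2, mul_one]
          nlinarith [sq_nonneg ((p.2 - f (p.1 + (ε/2)*(p.1-A)))/(2*c)), ht, sq_nonneg (ε/2)]
        · rw [Prod.dist_eq]
          have habs : |p.1 - A| = |R| := by
            rw [← Real.sqrt_sq_eq_abs, ← Real.sqrt_sq_eq_abs]
            congr 1
            have hR2 : (0:ℝ) < R^2 := by positivity
            rw [div_pow, div_eq_one_iff_eq (ne_of_gt hR2)] at hu2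
            exact hu2
          apply max_lt
          · rw [Real.dist_eq, show p.1 - (p.1 + (ε/2)*(p.1-A)) = -((ε/2)*(p.1-A)) by ring,
              abs_neg, abs_mul, abs_of_pos ht, habs]
            nlinarith [hR1, hR0]
          · rw [Real.dist_eq]
            simpa using hε
      · -- perturb y
        have habs : 0 < |p.2 - f p.1| := abs_pos.2 hv
        have ht : (0:ℝ) < ε/(2*(|p.2 - f p.1|+1)) := by positivity
        refine ⟨(p.1, p.2 + (ε/(2*(|p.2 - f p.1|+1)))*(p.2 - f p.1)), ?_, ?_⟩
        · rw [hU_def]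
          simp only [mem_compl_iff, mem_setOf_eq, hg_def, not_le]
          have e1 : (p.2 + (ε/(2*(|p.2 - f p.1|+1)))*(p.2 - f p.1) - f p.1)/(2*c)
              = (1+(ε/(2*(|p.2 - f p.1|+1))))*((p.2 - f p.1)/(2*c)) := by
            field_simp
            ring
          rw [e1, mul_pow]
          have hs2 : 0 < ((p.2 - f p.1)/(2*c))^2 := by positivity
          nlinarith [hp', ht, hs2, mul_pos ht hs2,
            mul_nonneg (mul_nonneg ht.le ht.le) hs2.le]
        · rw [Prod.dist_eq]
          apply max_lt
          · rw [Real.dist_eq]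
            simpa using hε
          · rw [Real.dist_eq, show p.2 - (p.2 + (ε/(2*(|p.2 - f p.1|+1)))*(p.2 - f p.1))
                = -((ε/(2*(|p.2 - f p.1|+1)))*(p.2 - f p.1)) by ring,
              abs_neg, abs_mul, abs_of_pos ht]
            rw [div_mul_eq_mul_div, div_lt_iff₀ (by positivity)]
            nlinarith [habs, hε]
  refine ⟨U, hcpt, hconv, ?_⟩
  rw [Subset.antisymm hfr1 hfr2]
  ext p
  simp only [mem_setOf_eq, mem_image]
  constructor
  · intro hp
    rw [hg_def] at hp
    obtain ⟨θ, hθ, hcos, hsin⟩ := exists_angle (-((p.1 - A)/R)) ((p.2 - f p.1)/(2*c))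
      (by linear_combination hp)
    refine ⟨θ, hθ, ?_⟩
    rw [hcurve θ]
    have hx : A - R*Real.cos θ = p.1 := by
      rw [hcos]
      field_simp
      ring
    rw [hx, hsin]
    have hy : f p.1 + 2*c*((p.2 - f p.1)/(2*c)) = p.2 := by field_simp; ring
    rw [hy]
  · rintro ⟨θ, hθ, rfl⟩
    rw [hcurve θ, hg_def]
    have e1 : (A - R*Real.cos θ - A)/R = -Real.cos θ := by
      field_simp
      ring
    have e2 : (f (A - R*Real.cos θ) + 2*c*Real.sin θ - f (A - R*Real.cos θ))/(2*c)
        = Real.sin θ := by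
      rw [add_sub_cancel_left]
      field_simp
    show ((A - R*Real.cos θ - A)/R)^2 + ((f (A - R*Real.cos θ) + 2*c*Real.sin θ - f (A - R*Real.cos θ))/(2*c))^2 = 1
    rw [e1, e2]
    linear_combination Real.sin_sq_add_cos_sq θ
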